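/- The sequence Z of gap-lengths of 1's in the Thue–Morse sequence is 2-automatic: it is the image, under the coding 0 → 2, 1 → 1, 2 → 0, 3 → 1, of the iterative fixed point beginning with 0 of the 2-uniform morphism 0 → 01, 1 → 20, 2 → 23, 3 → 02. -/

import Mathlib

/-- Extension of a substitution `φ : A → B*` to finite words. -/
def wordMap {A B : Type} (φ : A → List B) (w : List A) : List B := w.flatMap φ

/-- `n`-fold iteration of a morphism applied to a word. -/
def iterWord {A : Type} (φ : A → List A) (n : ℕ) (w : List A) : List A :=
  (wordMap φ)^[n] w

/-- A morphism is `k`-uniform if every letter has image of length `k`. -/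
def Uniform {A : Type} (k : ℕ) (φ : A → List A) : Prop := ∀ a, (φ a).length = k

/-- The finite word `w` is a prefix of the infinite sequence `s`. -/
def PrefixSeq {A : Type} (w : List A) (s : ℕ → A) : Prop :=
  ∀ i, i < w.length → w[i]? = some (s i)

/-- `φ` is prolongable on `a₀`: `φ(a₀) = a₀ x` with `x` nonempty and iterates of `x` never empty. -/
def Prolongable {A : Type} (φ : A → List A) (a₀ : A) : Prop :=
  ∃ x : List A, x ≠ [] ∧ φ a₀ = a₀ :: x ∧ ∀ ℓ, iterWord φ ℓ x ≠ []

/-- `s` is the iterative fixed point of `φ` beginning with `a₀`: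
`φ` is prolongable on `a₀` and every iterate `φ^n(a₀)` is a prefix of `s`
(their lengths tend to infinity thanks to prolongability, so `s` is determined). -/
def IsIterFix {A : Type} (φ : A → List A) (a₀ : A) (s : ℕ → A) : Prop :=
  Prolongable φ a₀ ∧ ∀ n, PrefixSeq (iterWord φ n [a₀]) s

/-- `s` is ultimately periodic. -/
def UltimatelyPeriodic {A : Type} (s : ℕ → A) : Prop :=
  ∃ N p : ℕ, 1 ≤ p ∧ ∀ n, N ≤ n → s (n + p) = s n

/-- The extension of `φ` to infinite sequences fixes `s`: for every `m`,
the image of the length-`m` prefix of `s` is again a prefix of `s`. -/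
def SeqFixedPoint {A : Type} (φ : A → List A) (s : ℕ → A) : Prop :=
  ∀ m, PrefixSeq (wordMap φ ((List.range m).map s)) s

/-- The Thue–Morse morphism `0 ↦ 01`, `1 ↦ 10` (with `0 := false`, `1 := true`). -/
def mu : Bool → List Bool
  | false => [false, true]
  | true => [true, false]

/-- The 2-uniform morphism `0 ↦ 01, 1 ↦ 20, 2 ↦ 23, 3 ↦ 02`. -/
def rho : Fin 4 → List (Fin 4) := ![[0, 1], [2, 0], [2, 3], [0, 2]]

/-- The coding `0 ↦ 2, 1 ↦ 1, 2 ↦ 0, 3 ↦ 1`. -/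
def code : Fin 4 → Fin 3 := ![2, 1, 0, 1]

/- ## Auxiliary lemmas -/

lemma wordMap_length {A : Type} (φ : A → List A) (h : Uniform 2 φ) (w : List A) :
    (wordMap φ w).length = 2 * w.length := by
  induction w with
  | nil => rfl
  | cons a w ih => simp [wordMap, h a] at *; omega

lemma iterWord_length {A : Type} (φ : A → List A) (h : Uniform 2 φ) (w : List A) (n : ℕ) :
    (iterWord φ n w).length = 2 ^ n * w.length := by
  induction n with
  | zero => simp [iterWord]
  | succ n ih =>
      have : iterWord φ (n+1) w = wordMap φ (iterWord φ n w) :=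
        Function.iterate_succ_apply' _ _ _
      rw [this, wordMap_length φ h, ih]; ring

lemma wordMap_get2 {A : Type} (φ : A → List A) (h : Uniform 2 φ) (w : List A) :
    ∀ (j r : ℕ), r < 2 →
      (wordMap φ w)[2 * j + r]? = (w[j]?).bind (fun a => (φ a)[r]?) := by
  induction w with
  | nil => intro j r _; simp [wordMap]
  | cons a w ih =>
      intro j r hr
      have hw : wordMap φ (a :: w) = φ a ++ wordMap φ w := by simp [wordMap]
      match j with
      | 0 =>
          rw [hw]
          have : 2 * 0 + r < (φ a).length := by rw [h a]; omega
          rw [List.getElem?_append_left this]; simp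
      | j + 1 =>
          rw [hw]
          have hle : (φ a).length ≤ 2 * (j + 1) + r := by rw [h a]; omega
          rw [List.getElem?_append_right hle, h a]
          have : 2 * (j + 1) + r - 2 = 2 * j + r := by omega
          rw [this, ih j r hr]
          simp

lemma mu_uniform : Uniform 2 mu := by intro a; cases a <;> rfl

lemma rho_uniform : Uniform 2 rho := by intro a; fin_cases a <;> rfl

theorem stmt17 (t : ℕ → Bool) (ht : IsIterFix mu false t)
    (zeros : ℕ → ℕ) (hmono : StrictMono zeros)
    (hz : ∀ i, t (zeros i) = false)
    (hall : ∀ n, t n = false → ∃ i, zeros i = n)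
    (Z : ℕ → Fin 3)
    (hZ : ∀ i, (Z i : ℕ) = zeros (i + 1) - zeros i - 1) :
    Uniform 2 rho ∧ ∃ s : ℕ → Fin 4, IsIterFix rho 0 s ∧ ∀ n, Z n = code (s n) := by
  obtain ⟨_, hpref⟩ := ht
  -- t 0 = false
  have ht0 : t 0 = false := by
    have := hpref 0 0 (by simp [iterWord])
    simp [iterWord] at this
    exact this
  -- key recursion for t
  have htkey : ∀ j r, r < 2 → some (t (2 * j + r)) = (mu (t j))[r]? := by
    intro j r hr
    have hj : j < 2 ^ j := Nat.lt_two_pow_self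
    have hlen : ∀ m, (iterWord mu m [false]).length = 2 ^ m := by
      intro m; rw [iterWord_length mu mu_uniform]; simp
    have h1 : (iterWord mu (j+1) [false])[2 * j + r]? = some (t (2 * j + r)) := by
      apply hpref (j+1); rw [hlen]; rw [pow_succ]; omega
    have hsucc : iterWord mu (j+1) [false] = wordMap mu (iterWord mu j [false]) :=
      Function.iterate_succ_apply' _ _ _
    rw [hsucc, wordMap_get2 mu mu_uniform _ j r hr] at h1
    have h2 : (iterWord mu j [false])[j]? = some (t j) := by
      apply hpref j; rw [hlen]; exact hj
    rw [h2] at h1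
    simpa using h1.symm
  have hteven : ∀ j, t (2 * j) = t j := by
    intro j
    have h2 := htkey j 0 (by omega)
    cases h : t j
    all_goals (rw [h] at h2; simp [mu] at h2; simp [h2, h])
  have htodd : ∀ j, t (2 * j + 1) = !(t j) := by
    intro j
    have h2 := htkey j 1 (by omega)
    cases h : t j
    all_goals (rw [h] at h2; simp [mu] at h2; simp [h2, h])
  -- explicit formula for zeros
  set u : ℕ → ℕ := fun k => 2 * k + (if t k then 1 else 0) with hu
  have hu_zero : ∀ k, t (u k) = false := by
    intro k
    cases h : t k
    · simpa [hu, h] using (hteven k).trans h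
    · have := (htodd k).trans (by rw [h])
      simpa [hu, h] using this
  have hu_mono : StrictMono u := by
    apply strictMono_nat_of_lt_succ
    intro k
    simp only [hu]
    split <;> split <;> omega
  have hu_all : ∀ n, t n = false → ∃ k, u k = n := by
    intro n hn
    rcases Nat.even_or_odd n with ⟨j, hj⟩ | ⟨j, hj⟩
    · refine ⟨j, ?_⟩
      have h2 := hteven j
      rw [two_mul, ← hj] at h2
      rw [hn] at h2
      simp [hu, ← h2]; omega
    · refine ⟨j, ?_⟩
      have h1 : t (2 * j + 1) = false := by rwa [← hj]
      have : t j = true := by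
        have := htodd j; rw [h1] at this
        cases h : t j
        · rw [h] at this; simp at this
        · rfl
      simp [hu, this]; omega
  have hzu : ∀ k, zeros k = u k := by
    intro k
    induction k using Nat.strong_induction_on with
    | _ k ih =>
      obtain ⟨m, hm⟩ := hu_all (zeros k) (hz k)
      obtain ⟨m', hm'⟩ := hall (u k) (hu_zero k)
      have h1 : u k ≤ zeros k := by
        by_contra h
        push_neg at h
        have hmk : m < k := hu_mono.lt_iff_lt.mp (by omega)
        have h2 := ih m hmk
        have : zeros m = zeros k := by rw [h2, hm]
        exact absurd (hmono.injective this) (Nat.ne_of_lt hmk)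
      have h2 : zeros k ≤ u k := by
        by_contra h
        push_neg at h
        have hmk : m' < k := hmono.lt_iff_lt.mp (by omega)
        have h2 := ih m' hmk
        have : u m' = u k := by rw [← h2, hm']
        exact absurd (hu_mono.injective this) (Nat.ne_of_lt hmk)
      omega
  -- the fixed point of rho
  set s : ℕ → Fin 4 := fun n =>
    match t n, t (n+1) with
    | false, true => 0
    | true, true => 1
    | true, false => 2
    | false, false => 3
    with hs
  have hstep : ∀ j r, r < 2 → (rho (s j))[r]? = some (s (2 * j + r)) := by
    intro j r hr
    have e0 : t (2 * j) = t j := hteven j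
    have e1 : t (2 * j + 1) = !(t j) := htodd j
    have e2 : t (2 * j + 1 + 1) = t (j + 1) := by
      have : 2 * j + 1 + 1 = 2 * (j + 1) := by ring
      rw [this, hteven]
    interval_cases r <;>
      · simp only [hs]
        cases h0 : t j <;> cases h1 : t (j+1) <;>
          simp_all <;> rfl
  refine ⟨rho_uniform, s, ⟨⟨[1], by simp, by rfl, ?_⟩, ?_⟩, ?_⟩
  · intro ℓ
    have hl := iterWord_length rho rho_uniform [1] ℓ
    have hp : (0:ℕ) < 2 ^ ℓ := Nat.pow_pos (by norm_num)
    intro hcon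
    rw [hcon] at hl
    simp at hl
    omega
  · -- prefix property
    intro n
    induction n with
    | zero =>
        intro i hi
        simp [iterWord] at hi
        subst hi
        have ht1 : t 1 = true := by
          have := htodd 0; rw [ht0] at this; simpa using this
        simp [iterWord, hs, ht0, ht1]
    | succ n ih =>
        intro i hi
        have hlen : (iterWord rho (n+1) [(0 : Fin 4)]).length = 2 ^ (n+1) := by
          rw [iterWord_length rho rho_uniform]; simp
        rw [hlen] at hi
        obtain ⟨j, r, hr, hij⟩ : ∃ j r, r < 2 ∧ i = 2 * j + r :=
          ⟨i / 2, i % 2, Nat.mod_lt _ (by omega), (Nat.div_add_mod i 2).symm ▸ by omega⟩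
        have hjn : j < 2 ^ n := by
          rw [pow_succ] at hi; omega
        have hsucc : iterWord rho (n+1) [(0:Fin 4)] = wordMap rho (iterWord rho n [(0:Fin 4)]) :=
          Function.iterate_succ_apply' _ _ _
        rw [hij, hsucc, wordMap_get2 rho rho_uniform _ j r hr]
        have hgj : (iterWord rho n [(0:Fin 4)])[j]? = some (s j) := by
          apply ih; rw [iterWord_length rho rho_uniform]; simpa using hjn
        rw [hgj]
        simpa using hstep j r hr
  · -- Z n = code (s n)
    intro n
    have hv := hZ n
    rw [hzu n, hzu (n+1)] at hv
    apply Fin.ext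
    rw [hv]
    simp only [hs, hu]
    cases h0 : t n <;> cases h1 : t (n+1) <;> simp [h0, h1, code] <;> omega
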